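/- arXiv:math/9810143 — 5 statements merged into one kernel-verified Lean document; each statement's English description precedes it below -/
import Mathlib

section
/- Let (a_{ij}(λ)) be a k by k matrix of polynomials in λ over a field, and suppose that at λ = λ_0 the matrix (a_{ij}(λ_0)) has rank at most m, where m ≤ k. Then the polynomial det(a_{ij}(λ)) is divisible by (λ - λ_0)^{k-m}. -/
/-- If a square matrix of polynomials over a field has, upon evaluation at `λ₀`, rank
at most `m ≤ k`, then its determinant is divisible by `(λ - λ₀)^{k-m}`. -/
theorem det_dvd_of_rank_le (F : Type*) [Field F] (k m : ℕ) (hm : m ≤ k)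
    (A : Matrix (Fin k) (Fin k) (Polynomial F)) (lam0 : F)
    (hrank : (A.map (Polynomial.evalRingHom lam0)).rank ≤ m) :
    (Polynomial.X - Polynomial.C lam0) ^ (k - m) ∣ A.det := by
  classical
  set p : Polynomial F := Polynomial.X - Polynomial.C lam0 with hp
  set d := k - m with hd
  set B := A.map (Polynomial.evalRingHom lam0) with hB
  set K := LinearMap.ker B.mulVecLin with hK
  -- kernel has dimension at least d
  have hrn : Module.finrank F (LinearMap.range B.mulVecLin)
      + Module.finrank F K = k := by
    rw [hK, LinearMap.finrank_range_add_finrank_ker B.mulVecLin]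
    simp [Module.finrank_pi]
  have hker : d ≤ Module.finrank F K := by
    have : B.rank = Module.finrank F (LinearMap.range B.mulVecLin) := rfl
    omega
  -- a linearly independent family of size d inside the kernel
  let bK := Module.finBasis F K
  let w : Fin d → (Fin k → F) := fun i =>
    (bK (Fin.castLE hker i) : Fin k → F)
  have hw : ∀ i, w i ∈ K := fun i => (bK (Fin.castLE hker i)).2
  have liw : LinearIndependent F w := by
    have h1 : LinearIndependent F fun i : Fin d => bK (Fin.castLE hker i) :=
      bK.linearIndependent.comp _ (Fin.castLE_injective hker)
    exact h1.map' K.subtype K.ker_subtype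
  -- extend to a basis of F^k
  have hs : LinearIndepOn F id (Set.range w) :=
    liw.linearIndepOn_id
  let bext := Module.Basis.extend hs
  haveI : Fintype ↥(hs.extend (Set.subset_univ _)) :=
    FiniteDimensional.fintypeBasisIndex bext
  let e := bext.indexEquiv (Pi.basisFun F (Fin k))
  let b' : Module.Basis (Fin k) F (Fin k → F) := bext.reindex e
  let P : Matrix (Fin k) (Fin k) F := (Pi.basisFun F (Fin k)).toMatrix ⇑b'
  have hPcol : ∀ i j, P i j = b' j i := by
    intro i j
    simp [P, Module.Basis.toMatrix_apply]
  have hPdet : P.det ≠ 0 := by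
    haveI := (Pi.basisFun F (Fin k)).invertibleToMatrix b'
    exact (Matrix.isUnit_det_of_invertible P).ne_zero
  -- the set of columns lying in the kernel
  have hwi : Function.Injective w := liw.injective
  let ι : Fin d → Fin k := fun i =>
    e ⟨w i, hs.subset_extend (Set.subset_univ _) (Set.mem_range_self i)⟩
  have hιinj : Function.Injective ι := by
    intro a b hab
    have h3 := e.injective hab
    have h2 := Subtype.ext_iff.mp h3
    exact hwi h2
  let S : Finset (Fin k) := Finset.image ι Finset.univ
  have hScard : S.card = d := by
    rw [Finset.card_image_of_injective _ hιinj, Finset.card_univ, Fintype.card_fin]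
  have hbS : ∀ j ∈ S, b' j ∈ K := by
    intro j hj
    obtain ⟨i, -, rfl⟩ := Finset.mem_image.mp hj
    have : b' (ι i) = w i := by
      simp only [b', ι, Module.Basis.reindex_apply, Equiv.symm_apply_apply]
      exact Module.Basis.extend_apply_self hs _
    rw [this]; exact hw i
  -- the product matrix
  set Q := A * P.map Polynomial.C with hQdef
  have hQmap : Q.map (Polynomial.evalRingHom lam0) = B * P := by
    rw [hQdef, Matrix.map_mul, ← hB]
    congr 1
    rw [Matrix.map_map]
    ext i j
    simp
  have hdvd : ∀ i j, j ∈ S → p ∣ Q i j := by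
    intro i j hj
    rw [hp, Polynomial.dvd_iff_isRoot]
    have hev : Polynomial.eval lam0 (Q i j) = (B * P) i j := by
      rw [← hQmap]; rfl
    have hz : (B * P) i j = 0 := by
      have hker0 : B.mulVecLin (b' j) = 0 := LinearMap.mem_ker.mp (hbS j hj)
      have : (B * P) i j = B.mulVecLin (b' j) i := by
        simp only [Matrix.mul_apply, Matrix.mulVecLin_apply, Matrix.mulVec, dotProduct]
        exact Finset.sum_congr rfl fun l _ => by rw [hPcol]
      rw [this, hker0]; rfl
    unfold Polynomial.IsRoot
    rw [hev, hz]
  -- factor p out of the columns in S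
  let M : Matrix (Fin k) (Fin k) (Polynomial F) := fun i j =>
    if j ∈ S then Q i j / p else Q i j
  have hpne : p ≠ 0 := Polynomial.X_sub_C_ne_zero lam0
  have hQM : Q = Matrix.of fun i j => (if j ∈ S then p else 1) * M i j := by
    funext i j
    by_cases hj : j ∈ S
    · simp only [Matrix.of_apply, M, if_pos hj]
      exact (EuclideanDomain.mul_div_cancel' hpne (hdvd i j hj)).symm
    · simp [M, hj]
  have hdetQ : Q.det = p ^ d * M.det := by
    rw [hQM, Matrix.det_mul_row]
    congr 1
    rw [Finset.prod_ite_mem, Finset.univ_inter, Finset.prod_const, hScard]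
  have hdvddet : p ^ d ∣ Q.det := ⟨M.det, hdetQ⟩
  have hdetfac : Q.det = A.det * Polynomial.C P.det := by
    rw [hQdef, Matrix.det_mul]
    congr 1
    have := (Polynomial.C : F →+* Polynomial F).map_det P
    simpa using this.symm
  rw [hdetfac] at hdvddet
  -- p is coprime to the nonzero constant C P.det
  have hirr : Irreducible p := Polynomial.irreducible_X_sub_C lam0
  have hnotdvd : ¬ p ∣ Polynomial.C P.det := by
    intro hdvd'
    rw [hp, Polynomial.dvd_iff_isRoot] at hdvd'
    simp [Polynomial.IsRoot] at hdvd'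
    exact hPdet hdvd'
  have hcop : IsCoprime p (Polynomial.C P.det) :=
    (hirr.coprime_iff_not_dvd).mpr hnotdvd
  exact (hcop.pow_left).dvd_of_dvd_mul_right hdvddet
end

section
/- Let (a_i) be a sequence in a field, and define H_s(k) = det( (a_{(i+j+s)/2})_{0≤i,j≤k-1} ) with the convention that a_r = 0 when r is not an integer, and H_s(0) = 1. Suppose H_0(k) ≠ 0 for all k ≥ 0 and define λ_0 = a_0 and λ_k = H_0(k-1)H_0(k+1)/H_0(k)^2 for k ≥ 1 (so H_0(k+1) = λ_0^{k+1}λ_1^k···λ_k). Then H_2(k) = λ_0^{-1} H_0(k+1) · Σ_{j=0}^{⌊k/2⌋} ∏_{i=1}^{j} (λ_{2i-1}/λ_{2i}). -/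
open Matrix Finset

/-- Interleaving equivalence: evens then odds. -/
def evenOddEquiv (k : ℕ) : Fin ((k+1)/2) ⊕ Fin (k/2) ≃ Fin k where
  toFun := Sum.elim (fun p => ⟨2*p, by omega⟩) (fun q => ⟨2*q+1, by omega⟩)
  invFun := fun x => if _ : (x : ℕ) % 2 = 0 then Sum.inl ⟨(x:ℕ)/2, by omega⟩
    else Sum.inr ⟨(x:ℕ)/2, by omega⟩
  left_inv := by
    rintro (p | q)
    · simp
    · show dite _ _ _ = _
      rw [dif_neg (by simp)]
      simp [Fin.ext_iff]; omega
  right_inv := by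
    intro x
    by_cases h : (x : ℕ) % 2 = 0 <;> simp [h, Fin.ext_iff] <;> omega

theorem det_checkerboard {F : Type*} [CommRing F] (k : ℕ) (f : ℕ → ℕ → F)
    (hf : ∀ i j, (i + j) % 2 = 1 → f i j = 0) :
    Matrix.det (Matrix.of fun i j : Fin k => f i j) =
      Matrix.det (Matrix.of fun p q : Fin ((k+1)/2) => f (2*p) (2*q)) *
      Matrix.det (Matrix.of fun p q : Fin (k/2) => f (2*p+1) (2*q+1)) := by
  rw [← Matrix.det_submatrix_equiv_self (evenOddEquiv k)]
  have : (Matrix.of fun i j : Fin k => f i j).submatrix (evenOddEquiv k) (evenOddEquiv k) =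
      Matrix.fromBlocks (Matrix.of fun p q : Fin ((k+1)/2) => f (2*p) (2*q)) 0 0
        (Matrix.of fun p q : Fin (k/2) => f (2*p+1) (2*q+1)) := by
    ext (p | p) (q | q) <;>
      simp [evenOddEquiv, Matrix.fromBlocks] <;> exact hf _ _ (by omega)
  rw [this, Matrix.det_fromBlocks_zero₂₁]


def cornerEquiv (n : ℕ) : Fin 2 ⊕ Fin n ≃ Fin (n+2) where
  toFun := Sum.elim (fun i => if i = 0 then 0 else Fin.last (n+1))
    (fun p => ⟨(p : ℕ) + 1, by omega⟩)
  invFun := fun x => if h0 : (x : ℕ) = 0 then Sum.inl 0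
    else if hl : (x:ℕ) = n+1 then Sum.inl 1
    else Sum.inr ⟨(x:ℕ)-1, by omega⟩
  left_inv := by
    rintro (i | p)
    · fin_cases i <;> simp [Fin.ext_iff, -Fin.val_eq_zero_iff]
    · simp only [Sum.elim_inr]
      have h1 : (p:ℕ)+1 ≠ 0 := by omega
      have h2 : (p:ℕ)+1 ≠ n+1 := by omega
      show (if h0 : (p:ℕ)+1 = 0 then (Sum.inl 0 : Fin 2 ⊕ Fin n) else if hl : (p:ℕ)+1 = n+1
        then Sum.inl 1 else Sum.inr ⟨(p:ℕ)+1-1, by omega⟩) = Sum.inr p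
      simp only [h1, h2, dite_false]
      simp [Fin.ext_iff, -Fin.val_eq_zero_iff]
  right_inv := by
    intro x
    dsimp only
    rcases Nat.lt_or_ge (x : ℕ) 1 with h | h
    · rw [dif_pos (by omega)]; simp [Fin.ext_iff, -Fin.val_eq_zero_iff]; omega
    rcases Nat.lt_or_ge (x : ℕ) (n+1) with h2 | h2
    · rw [dif_neg (by omega), dif_neg (by omega)]
      simp [Fin.ext_iff, -Fin.val_eq_zero_iff]; omega
    · rw [dif_neg (by omega), dif_pos (by omega)]
      simp [Fin.ext_iff, Fin.last, -Fin.val_eq_zero_iff]; omega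

theorem desnanot_jacobi {F : Type*} [Field F] (n : ℕ)
    (M : Matrix (Fin (n+2)) (Fin (n+2)) F) (hM : M.det ≠ 0) :
    M.det * (M.submatrix (fun i : Fin n => (Fin.succ i).castSucc)
        (fun j : Fin n => (Fin.succ j).castSucc)).det =
      (M.submatrix Fin.succ Fin.succ).det * (M.submatrix Fin.castSucc Fin.castSucc).det -
      (M.submatrix Fin.castSucc Fin.succ).det * (M.submatrix Fin.succ Fin.castSucc).det := by
  classical
  set L := Fin.last (n+1) with hL
  set X : Matrix (Fin (n+2)) (Fin (n+2)) F := Matrix.of fun i j =>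
    if i = 0 then adjugate M 0 j else if i = L then adjugate M L j
    else (1 : Matrix (Fin (n+2)) (Fin (n+2)) F) i j with hX
  have hL0 : L ≠ 0 := by simp [hL, Fin.ext_iff, -Fin.val_eq_zero_iff]
  have hps : ∀ p : Fin n, ((Fin.succ p).castSucc : Fin (n+2)) = ⟨(p:ℕ)+1, by omega⟩ :=
    fun p => by simp [Fin.ext_iff, -Fin.val_eq_zero_iff]
  have hXM : X * M = Matrix.of fun i j =>
      if i = 0 then (M.det • (1 : Matrix (Fin (n+2)) (Fin (n+2)) F)) i j
      else if i = L then (M.det • (1 : Matrix (Fin (n+2)) (Fin (n+2)) F)) i j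
      else M i j := by
    ext i j
    by_cases h0 : i = 0
    · subst h0
      have : (X * M) 0 j = (adjugate M * M) 0 j := by
        rw [Matrix.mul_apply, Matrix.mul_apply]
        exact Finset.sum_congr rfl fun k _ => by rw [hX]; simp
      rw [this, Matrix.adjugate_mul]
      simp
    · by_cases hl : i = L
      · subst hl
        have : (X * M) L j = (adjugate M * M) L j := by
          rw [Matrix.mul_apply, Matrix.mul_apply]
          exact Finset.sum_congr rfl fun k _ => by rw [hX]; simp [hL0]
        rw [this, Matrix.adjugate_mul]
        simp [hL0]
      · have : (X * M) i j = ((1 : Matrix (Fin (n+2)) (Fin (n+2)) F) * M) i j := by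
          rw [Matrix.mul_apply, Matrix.mul_apply]
          exact Finset.sum_congr rfl fun k _ => by rw [hX]; simp [h0, hl]
        rw [this, Matrix.one_mul]
        simp [h0, hl]
  have hcne0 : ∀ p : Fin n, ((cornerEquiv n) (Sum.inr p) : ℕ) ≠ 0 := fun p => by
    simp [cornerEquiv]
  have hcneL : ∀ p : Fin n, ((cornerEquiv n) (Sum.inr p)) ≠ L := fun p => by
    simp [cornerEquiv, hL, Fin.ext_iff, -Fin.val_eq_zero_iff]; omega
  -- determinant of X*M
  have hdXM : (X * M).det = M.det ^ 2 *
      (M.submatrix (fun i : Fin n => (Fin.succ i).castSucc)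
        (fun j : Fin n => (Fin.succ j).castSucc)).det := by
    rw [hXM, ← Matrix.det_submatrix_equiv_self (cornerEquiv n)]
    have : (Matrix.of fun i j =>
        if i = 0 then (M.det • (1 : Matrix (Fin (n+2)) (Fin (n+2)) F)) i j
        else if i = L then (M.det • (1 : Matrix (Fin (n+2)) (Fin (n+2)) F)) i j
        else M i j).submatrix (cornerEquiv n) (cornerEquiv n) =
        Matrix.fromBlocks (M.det • (1 : Matrix (Fin 2) (Fin 2) F)) 0
          (Matrix.of fun (p : Fin n) (i : Fin 2) => M ((Fin.succ p).castSucc)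
            (if i = 0 then 0 else L))
          (M.submatrix (fun i : Fin n => (Fin.succ i).castSucc)
            (fun j : Fin n => (Fin.succ j).castSucc)) := by
      ext (i | p) (j | q)
      · fin_cases i <;> fin_cases j <;>
          simp [cornerEquiv, hL, Matrix.one_apply, Fin.ext_iff, -Fin.val_eq_zero_iff] <;> omega
      · fin_cases i <;>
          simp [cornerEquiv, hL, Matrix.one_apply, Fin.ext_iff, -Fin.val_eq_zero_iff] <;> omega
      · fin_cases j <;>
        · simp only [Matrix.submatrix_apply, Matrix.of_apply, Matrix.fromBlocks_apply₂₁]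
          rw [if_neg (by simpa [Fin.ext_iff, -Fin.val_eq_zero_iff] using hcne0 p), if_neg (hcneL p)]
          simp [cornerEquiv, hL, Fin.ext_iff, Fin.last, hps, -Fin.val_eq_zero_iff]
      · simp only [Matrix.submatrix_apply, Matrix.of_apply, Matrix.fromBlocks_apply₂₂]
        rw [if_neg (by simpa [Fin.ext_iff, -Fin.val_eq_zero_iff] using hcne0 p), if_neg (hcneL p)]
        congr 1 <;> simp [cornerEquiv, Fin.ext_iff, -Fin.val_eq_zero_iff]
    rw [this, Matrix.det_fromBlocks_zero₁₂, Matrix.det_smul, Matrix.det_one]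
    simp [Fintype.card_fin]
  -- determinant of X
  have hdX : X.det =
      (M.submatrix Fin.succ Fin.succ).det * (M.submatrix Fin.castSucc Fin.castSucc).det -
      (M.submatrix Fin.castSucc Fin.succ).det * (M.submatrix Fin.succ Fin.castSucc).det := by
    rw [← Matrix.det_submatrix_equiv_self (cornerEquiv n)]
    have : X.submatrix (cornerEquiv n) (cornerEquiv n) =
        Matrix.fromBlocks
          !![adjugate M 0 0, adjugate M 0 L; adjugate M L 0, adjugate M L L]
          (Matrix.of fun (i : Fin 2) (q : Fin n) =>
            adjugate M (if i = 0 then 0 else L) ((Fin.succ q).castSucc))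
          0 (1 : Matrix (Fin n) (Fin n) F) := by
      ext (i | p) (j | q)
      · fin_cases i <;> fin_cases j <;>
          simp [cornerEquiv, hX, hL, Fin.ext_iff, -Fin.val_eq_zero_iff]
      · fin_cases i <;> simp [cornerEquiv, hX, hL, Fin.ext_iff, hps, -Fin.val_eq_zero_iff]
      · simp only [Matrix.submatrix_apply, hX, Matrix.of_apply, Matrix.fromBlocks_apply₂₁]
        rw [if_neg (by simpa [Fin.ext_iff, -Fin.val_eq_zero_iff] using hcne0 p), if_neg (hcneL p)]
        fin_cases j <;>
          simp [cornerEquiv, hL, Matrix.one_apply, Fin.ext_iff, -Fin.val_eq_zero_iff] <;> omega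
      · simp only [Matrix.submatrix_apply, hX, Matrix.of_apply, Matrix.fromBlocks_apply₂₂]
        rw [if_neg (by simpa [Fin.ext_iff, -Fin.val_eq_zero_iff] using hcne0 p), if_neg (hcneL p)]
        simp [cornerEquiv, Matrix.one_apply, Fin.ext_iff, -Fin.val_eq_zero_iff]
    rw [this, Matrix.det_fromBlocks_zero₂₁, Matrix.det_one, mul_one,
      Matrix.det_fin_two_of]
    have e00 : adjugate M 0 0 = (M.submatrix Fin.succ Fin.succ).det := by
      rw [Matrix.adjugate_fin_succ_eq_det_submatrix]
      simp [Fin.succAbove_zero]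
    have eLL : adjugate M L L = (M.submatrix Fin.castSucc Fin.castSucc).det := by
      rw [Matrix.adjugate_fin_succ_eq_det_submatrix]
      simp [hL, Fin.succAbove_last, ← two_mul, pow_mul, neg_one_sq]
    have e0L : adjugate M 0 L = (-1 : F)^(n+1) * (M.submatrix Fin.castSucc Fin.succ).det := by
      rw [Matrix.adjugate_fin_succ_eq_det_submatrix]
      simp [hL, Fin.succAbove_last, Fin.succAbove_zero]
    have eL0 : adjugate M L 0 = (-1 : F)^(n+1) * (M.submatrix Fin.succ Fin.castSucc).det := by
      rw [Matrix.adjugate_fin_succ_eq_det_submatrix]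
      simp [hL, Fin.succAbove_last, Fin.succAbove_zero]
    rw [e00, eLL, e0L, eL0]
    have hs : ((-1 : F)^(n+1)) * ((-1 : F)^(n+1)) = 1 := by
      rw [← pow_add]
      exact Even.neg_one_pow ⟨n+1, by ring⟩
    linear_combination
      (-((M.submatrix Fin.castSucc Fin.succ).det * (M.submatrix Fin.succ Fin.castSucc).det)) * hs
  have h3 : X.det * M.det = (M.det * (M.submatrix (fun i : Fin n => (Fin.succ i).castSucc)
      (fun j : Fin n => (Fin.succ j).castSucc)).det) * M.det := by
    rw [← Matrix.det_mul, hdXM]; ring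
  have h4 := mul_right_cancel₀ hM h3
  rw [← h4, hdX]

section Hankel

variable {F : Type*} [Field F]

/-- classical Hankel determinant of `a`, shifted by `t`. -/
def hdet (a : ℕ → F) (t m : ℕ) : F :=
  Matrix.det (Matrix.of fun i j : Fin m => a ((i : ℕ) + (j : ℕ) + t))

@[simp] lemma hdet_zero (a : ℕ → F) (t : ℕ) : hdet a t 0 = 1 := Matrix.det_fin_zero

@[simp] lemma hdet_one' (a : ℕ → F) (t : ℕ) : hdet a t 1 = a t := by
  simp [hdet, Matrix.det_fin_one]

lemma hdet_dj (a : ℕ → F) (t n : ℕ) (h : hdet a t (n+2) ≠ 0) :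
    hdet a t (n+2) * hdet a (t+2) n =
      hdet a (t+2) (n+1) * hdet a t (n+1) - hdet a (t+1) (n+1) * hdet a (t+1) (n+1) := by
  have key := desnanot_jacobi n (Matrix.of fun i j : Fin (n+2) => a ((i:ℕ)+(j:ℕ)+t)) h
  have e1 : ((Matrix.of fun i j : Fin (n+2) => a ((i:ℕ)+(j:ℕ)+t)).submatrix
      (fun i : Fin n => (Fin.succ i).castSucc) (fun j : Fin n => (Fin.succ j).castSucc)) =
      Matrix.of fun i j : Fin n => a ((i:ℕ)+(j:ℕ)+(t+2)) := by
    ext i j; simp only [Matrix.submatrix_apply, Matrix.of_apply]; congr 1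
    simp only [Fin.coe_castSucc, Fin.val_succ]; omega
  have e2 : ((Matrix.of fun i j : Fin (n+2) => a ((i:ℕ)+(j:ℕ)+t)).submatrix
      Fin.succ Fin.succ) = Matrix.of fun i j : Fin (n+1) => a ((i:ℕ)+(j:ℕ)+(t+2)) := by
    ext i j; simp only [Matrix.submatrix_apply, Matrix.of_apply]; congr 1
    simp only [Fin.coe_castSucc, Fin.val_succ]; omega
  have e3 : ((Matrix.of fun i j : Fin (n+2) => a ((i:ℕ)+(j:ℕ)+t)).submatrix
      Fin.castSucc Fin.castSucc) = Matrix.of fun i j : Fin (n+1) => a ((i:ℕ)+(j:ℕ)+t) := by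
    ext i j; simp only [Matrix.submatrix_apply, Matrix.of_apply]; congr 1
  have e4 : ((Matrix.of fun i j : Fin (n+2) => a ((i:ℕ)+(j:ℕ)+t)).submatrix
      Fin.castSucc Fin.succ) = Matrix.of fun i j : Fin (n+1) => a ((i:ℕ)+(j:ℕ)+(t+1)) := by
    ext i j; simp only [Matrix.submatrix_apply, Matrix.of_apply]; congr 1
    simp only [Fin.coe_castSucc, Fin.val_succ]; omega
  have e5 : ((Matrix.of fun i j : Fin (n+2) => a ((i:ℕ)+(j:ℕ)+t)).submatrix
      Fin.succ Fin.castSucc) = Matrix.of fun i j : Fin (n+1) => a ((i:ℕ)+(j:ℕ)+(t+1)) := by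
    ext i j; simp only [Matrix.submatrix_apply, Matrix.of_apply]; congr 1
    simp only [Fin.coe_castSucc, Fin.val_succ]; omega
  rw [e1, e2, e3, e4, e5] at key
  exact key

lemma hdet_dj0 (a : ℕ → F) (n : ℕ) (h : hdet a 0 (n+2) ≠ 0) :
    hdet a 0 (n+2) * hdet a 2 n =
      hdet a 2 (n+1) * hdet a 0 (n+1) - hdet a 1 (n+1) * hdet a 1 (n+1) := by
  simpa using hdet_dj a 0 n h

lemma hdet_sum_formula (a : ℕ → F) (h0ne : ∀ m, hdet a 0 m ≠ 0) (m : ℕ) :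
    hdet a 2 m = hdet a 0 (m+1) *
      ∑ j ∈ Finset.range (m+1), (hdet a 1 j)^2 / (hdet a 0 j * hdet a 0 (j+1)) := by
  induction m with
  | zero =>
    have h : a 0 ≠ 0 := by have := h0ne 1; simpa using this
    simp [Finset.sum_range_one]
    exact (mul_inv_cancel₀ h).symm
  | succ m ih =>
    have dj := hdet_dj0 a m (h0ne (m+2))
    rw [ih] at dj
    rw [Finset.sum_range_succ]
    set S := ∑ j ∈ Finset.range (m+1), (hdet a 1 j)^2 / (hdet a 0 j * hdet a 0 (j+1)) with hS
    have h1 := h0ne (m+1)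
    have h2 := h0ne (m+2)
    have expand : hdet a 2 (m+1) =
        (hdet a 0 (m+2) * (hdet a 0 (m+1) * S) + hdet a 1 (m+1)^2) / hdet a 0 (m+1) := by
      rw [eq_div_iff h1]
      linear_combination -dj
    rw [expand]
    field_simp

end Hankel

/-- For a sequence `a` in a field, with Hankel determinants
`H s k = det(a_{(i+j+s)/2})_{0≤i,j≤k-1}` (entries being `0` when `i+j+s` is odd),
all nonzero for `s = 0`, and `λ` defined by `λ 0 = a 0`,
`λ k = H 0 (k-1) · H 0 (k+1) / H 0 k ^ 2`, one has
`H 2 k = λ₀⁻¹ · H 0 (k+1) · ∑_{j=0}^{⌊k/2⌋} ∏_{i=1}^{j} (λ_{2i-1}/λ_{2i})`. -/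
theorem hankel_H2_eval (F : Type*) [Field F] (a : ℕ → F)
    (H : ℕ → ℕ → F)
    (hH : ∀ s k, H s k = Matrix.det (Matrix.of fun i j : Fin k =>
      if ((i : ℕ) + (j : ℕ) + s) % 2 = 0 then a (((i : ℕ) + (j : ℕ) + s) / 2) else 0))
    (hne : ∀ k, H 0 k ≠ 0)
    (lam : ℕ → F) (hlam0 : lam 0 = a 0)
    (hlam : ∀ k, 1 ≤ k → lam k = H 0 (k - 1) * H 0 (k + 1) / (H 0 k) ^ 2) :
    ∀ k, H 2 k = (lam 0)⁻¹ * H 0 (k + 1) *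
      ∑ j ∈ Finset.range (k / 2 + 1),
        ∏ i ∈ Finset.Icc 1 j, (lam (2 * i - 1) / lam (2 * i)) := by
  -- factorization of the aerated Hankel determinants
  have hfact : ∀ s k, s = 0 ∨ s = 2 →
      H s k = hdet a (s/2) ((k+1)/2) * hdet a (s/2+1) (k/2) := by
    intro s k hs
    rw [hH s k]
    rw [det_checkerboard k (fun i j => if (i+j+s) % 2 = 0 then a ((i+j+s)/2) else 0)
      (fun i j hij => by
        show (if (i+j+s) % 2 = 0 then a ((i+j+s)/2) else 0) = 0
        rcases hs with rfl | rfl <;> rw [if_neg (by omega)])]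
    rcases hs with rfl | rfl <;>
    · congr 1
      · congr 1; ext p q
        simp only [Matrix.of_apply]
        rw [if_pos (by omega)]
        congr 1; omega
      · congr 1; ext p q
        simp only [Matrix.of_apply]
        rw [if_pos (by omega)]
        congr 1; omega
  have hfact0 : ∀ k, H 0 k = hdet a 0 ((k+1)/2) * hdet a 1 (k/2) := by
    intro k; simpa using hfact 0 k (Or.inl rfl)
  have hfact2 : ∀ k, H 2 k = hdet a 1 ((k+1)/2) * hdet a 2 (k/2) := by
    intro k; simpa using hfact 2 k (Or.inr rfl)
  have hdvd : ∀ m : ℕ, (2*m+1)/2 = m ∧ (2*m)/2 = m := fun m => ⟨by omega, by omega⟩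
  have h0ne : ∀ m, hdet a 0 m ≠ 0 := by
    intro m
    have := hne (2*m)
    rw [hfact0 (2*m)] at this
    rw [(hdvd m).1, (hdvd m).2] at this
    exact left_ne_zero_of_mul this
  have h1ne : ∀ m, hdet a 1 m ≠ 0 := by
    intro m
    have := hne (2*m)
    rw [hfact0 (2*m)] at this
    rw [(hdvd m).1, (hdvd m).2] at this
    exact right_ne_zero_of_mul this
  have ha0 : a 0 ≠ 0 := by have := h0ne 1; simpa using this
  -- values of H 0 at even/odd arguments
  have hH0even : ∀ m, H 0 (2*m) = hdet a 0 m * hdet a 1 m := by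
    intro m; rw [hfact0 (2*m), (hdvd m).1, (hdvd m).2]
  have hH0odd : ∀ m, H 0 (2*m+1) = hdet a 0 (m+1) * hdet a 1 m := by
    intro m; rw [hfact0 (2*m+1)]
    have e1 : (2*m+1+1)/2 = m+1 := by omega
    have e2 : (2*m+1)/2 = m := by omega
    rw [e1, e2]
  -- the lambda products
  have lamprod : ∀ j, ∏ i ∈ Finset.Icc 1 j, (lam (2*i-1)/lam (2*i)) =
      a 0 * ((hdet a 1 j)^2 / (hdet a 0 j * hdet a 0 (j+1))) := by
    intro j
    induction j with
    | zero =>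
      rw [show Finset.Icc 1 0 = (∅ : Finset ℕ) by rfl]
      simp
      field_simp
    | succ j ih =>
      rw [Finset.prod_Icc_succ_top (by omega), ih]
      have l1 : lam (2*(j+1)-1) = H 0 (2*j) * H 0 (2*j+2) / H 0 (2*j+1)^2 := by
        have := hlam (2*j+1) (by omega)
        have e : 2*(j+1)-1 = 2*j+1 := by omega
        rw [e, this]
        congr 2 <;> omega
      have l2 : lam (2*(j+1)) = H 0 (2*j+1) * H 0 (2*j+3) / H 0 (2*j+2)^2 := by
        have := hlam (2*(j+1)) (by omega)
        rw [this]
        congr 2 <;> omega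
      have v1 : H 0 (2*j) = hdet a 0 j * hdet a 1 j := hH0even j
      have v2 : H 0 (2*j+1) = hdet a 0 (j+1) * hdet a 1 j := hH0odd j
      have v3 : H 0 (2*j+2) = hdet a 0 (j+1) * hdet a 1 (j+1) := by
        have := hH0even (j+1); rw [show 2*(j+1) = 2*j+2 by omega] at this; exact this
      have v4 : H 0 (2*j+3) = hdet a 0 (j+2) * hdet a 1 (j+1) := by
        have := hH0odd (j+1); rw [show 2*(j+1)+1 = 2*j+3 by omega] at this; exact this
      have n0j := h0ne j; have n0j1 := h0ne (j+1); have n0j2 := h0ne (j+2)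
      have n1j := h1ne j; have n1j1 := h1ne (j+1)
      have ratio : lam (2*(j+1)-1) / lam (2*(j+1)) =
          hdet a 0 j * (hdet a 1 (j+1))^2 / ((hdet a 1 j)^2 * hdet a 0 (j+2)) := by
        rw [l1, l2, v1, v2, v3, v4]
        field_simp
      rw [ratio]
      field_simp
  -- main computation
  intro k
  have hsum : ∑ j ∈ Finset.range (k/2+1), ∏ i ∈ Finset.Icc 1 j, (lam (2*i-1)/lam (2*i)) =
      a 0 * ∑ j ∈ Finset.range (k/2+1),
        (hdet a 1 j)^2 / (hdet a 0 j * hdet a 0 (j+1)) := by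
    rw [Finset.mul_sum]
    exact Finset.sum_congr rfl fun j _ => lamprod j
  rw [hsum, hlam0]
  obtain ⟨m, rfl | rfl⟩ := Nat.even_or_odd' k
  · -- k = 2m
    have e1 : (2*m)/2 = m := by omega
    have e2 : (2*m+1)/2 = m := by omega
    rw [hfact2 (2*m), e1, e2, hH0odd m]
    have key := hdet_sum_formula a h0ne m
    rw [key]
    field_simp
  · -- k = 2m+1
    have e1 : (2*m+1)/2 = m := by omega
    have e2 : (2*m+1+1)/2 = m+1 := by omega
    rw [hfact2 (2*m+1), e1, e2]
    have v : H 0 (2*m+1+1) = hdet a 0 (m+1) * hdet a 1 (m+1) := by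
      have := hH0even (m+1); rw [show 2*(m+1) = 2*m+1+1 by omega] at this; exact this
    rw [v]
    have key := hdet_sum_formula a h0ne m
    rw [key]
    field_simp
end

section
/- Let (a_i) be a sequence in a field and define M_r(k) = det( (a_{i+j+r})_{0≤i,j≤k-1} ). Then Jacobi's identity holds: M_1(m)^2 - M_0(m)·M_2(m) + M_0(m+1)·M_2(m-1) = 0 for all m ≥ 1. -/
open Matrix Equiv

namespace HankelJacobi

/-- `inl i ↦ i+1`, `inr 0 ↦ 0`, `inr 1 ↦ n+1`. -/
def eMid (n : ℕ) : Fin n ⊕ Fin 2 ≃ Fin (n + 2) where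
  toFun := Sum.elim (fun i => ⟨(i : ℕ) + 1, by omega⟩)
    (fun u => if u = 0 then ⟨0, by omega⟩ else ⟨n + 1, by omega⟩)
  invFun t :=
    if h : (t : ℕ) = 0 then Sum.inr 0
    else if h' : (t : ℕ) = n + 1 then Sum.inr 1
    else Sum.inl ⟨(t : ℕ) - 1, by omega⟩
  left_inv := by
    rintro (i | u)
    · dsimp only [Sum.elim_inl]
      rw [dif_neg (by omega), dif_neg (by omega)]
      simp
    · fin_cases u <;> simp
  right_inv := by
    intro t
    dsimp only
    by_cases h : (t : ℕ) = 0
    · rw [dif_pos h]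
      ext; simp [h]
    · by_cases h' : (t : ℕ) = n + 1
      · rw [dif_neg h, dif_pos h']
        ext; simp [h']
      · rw [dif_neg h, dif_neg h']
        ext; simp
        omega

/-- `inl i ↦ i+1`, `inr 0 ↦ 0`. -/
def eSucc (n : ℕ) : Fin n ⊕ Fin 1 ≃ Fin (n + 1) where
  toFun := Sum.elim (fun i => ⟨(i : ℕ) + 1, by omega⟩) (fun _ => ⟨0, by omega⟩)
  invFun t := if h : (t : ℕ) = 0 then Sum.inr 0 else Sum.inl ⟨(t : ℕ) - 1, by omega⟩
  left_inv := by
    rintro (i | u)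
    · dsimp only [Sum.elim_inl]
      rw [dif_neg (by omega)]
      simp
    · fin_cases u; simp
  right_inv := by
    intro t
    dsimp only
    by_cases h : (t : ℕ) = 0
    · rw [dif_pos h]; ext; simp [h]
    · rw [dif_neg h]; ext; simp; omega

/-- `inl i ↦ i`, `inr 0 ↦ n`. -/
def eCast (n : ℕ) : Fin n ⊕ Fin 1 ≃ Fin (n + 1) where
  toFun := Sum.elim (fun i => ⟨(i : ℕ), by omega⟩) (fun _ => ⟨n, by omega⟩)
  invFun t := if h : (t : ℕ) = n then Sum.inr 0 else Sum.inl ⟨(t : ℕ), by omega⟩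
  left_inv := by
    rintro (i | u)
    · dsimp only [Sum.elim_inl]
      rw [dif_neg (by omega)]
    · fin_cases u; simp
  right_inv := by
    intro t
    dsimp only
    by_cases h : (t : ℕ) = n
    · rw [dif_pos h]; ext; simp [h]
    · rw [dif_neg h]; ext; simp

/-- The Desnanot–Jacobi expression for Hankel determinants. -/
def E {F : Type*} [CommRing F] (x : ℕ → F) (n : ℕ) : F :=
  (Matrix.det (Matrix.of fun i j : Fin (n + 1) => x ((i : ℕ) + (j : ℕ) + 1))) ^ 2
    - Matrix.det (Matrix.of fun i j : Fin (n + 1) => x ((i : ℕ) + (j : ℕ)))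
      * Matrix.det (Matrix.of fun i j : Fin (n + 1) => x ((i : ℕ) + (j : ℕ) + 2))
    + Matrix.det (Matrix.of fun i j : Fin (n + 2) => x ((i : ℕ) + (j : ℕ)))
      * Matrix.det (Matrix.of fun i j : Fin n => x ((i : ℕ) + (j : ℕ) + 2))

lemma core {K : Type*} [Field K] (x : ℕ → K) (n : ℕ)
    (hP : (Matrix.of fun i j : Fin n => x ((i : ℕ) + (j : ℕ) + 2)).det ≠ 0) :
    E x n = 0 := by
  set P : Matrix (Fin n) (Fin n) K := Matrix.of fun i j => x ((i : ℕ) + (j : ℕ) + 2) with hPdef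
  set Q : Matrix (Fin n) (Fin 2) K :=
    Matrix.of (fun i v => if v = 0 then x ((i : ℕ) + 1) else x ((i : ℕ) + n + 2)) with hQdef
  set R : Matrix (Fin 2) (Fin n) K :=
    Matrix.of (fun u j => if u = 0 then x ((j : ℕ) + 1) else x (n + (j : ℕ) + 2)) with hRdef
  set S : Matrix (Fin 2) (Fin 2) K :=
    Matrix.of (fun u v =>
      if u = 0 then (if v = 0 then x 0 else x (n + 1))
      else (if v = 0 then x (n + 1) else x (2 * n + 2))) with hSdef
  haveI : Invertible P := P.invertibleOfIsUnitDet (isUnit_iff_ne_zero.mpr hP)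
  set T : Matrix (Fin 2) (Fin 2) K := S - R * ⅟P * Q with hTdef
  -- the big determinant
  have hA : (Matrix.of fun i j : Fin (n + 2) => x ((i : ℕ) + (j : ℕ))).det
      = P.det * T.det := by
    rw [← Matrix.det_submatrix_equiv_self (eMid n)
      (Matrix.of fun i j : Fin (n + 2) => x ((i : ℕ) + (j : ℕ)))]
    have : (Matrix.of fun i j : Fin (n + 2) => x ((i : ℕ) + (j : ℕ))).submatrix
        (eMid n) (eMid n) = fromBlocks P Q R S := by
      ext (i | u) (j | v) <;>
        first
          | (simp [eMid, fromBlocks, P, Q, R, S]; congr 1; omega)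
          | (fin_cases u <;> fin_cases v <;>
              simp [eMid, fromBlocks, P, Q, R, S] <;> congr 1 <;> omega)
          | (fin_cases u <;> simp [eMid, fromBlocks, P, Q, R, S] <;> congr 1 <;> omega)
          | (fin_cases v <;> simp [eMid, fromBlocks, P, Q, R, S] <;> congr 1 <;> omega)
    rw [this, det_fromBlocks₁₁]
  -- generic minor lemma
  have minor : ∀ u v : Fin 2,
      (fromBlocks P (Matrix.of fun i (_ : Fin 1) => Q i v)
        (Matrix.of fun (_ : Fin 1) j => R u j)
        (Matrix.of fun (_ : Fin 1) (_ : Fin 1) => S u v)).det = P.det * T u v := by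
    intro u v
    rw [det_fromBlocks₁₁]
    congr 1
    rw [det_fin_one]
    simp [hTdef, Matrix.sub_apply, Matrix.mul_apply, Finset.sum_mul]
  have h00 : P.det * T 0 0
      = (Matrix.of fun i j : Fin (n + 1) => x ((i : ℕ) + (j : ℕ))).det := by
    rw [← minor 0 0, ← Matrix.det_submatrix_equiv_self (eSucc n)
      (Matrix.of fun i j : Fin (n + 1) => x ((i : ℕ) + (j : ℕ)))]
    congr 1
    ext (i | u) (j | v) <;>
      [skip; fin_cases v; fin_cases u; (fin_cases u; fin_cases v)] <;>
      simp [eSucc, fromBlocks, P, Q, R, S] <;> congr 1 <;> omega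
  have h11 : P.det * T 1 1
      = (Matrix.of fun i j : Fin (n + 1) => x ((i : ℕ) + (j : ℕ) + 2)).det := by
    rw [← minor 1 1, ← Matrix.det_submatrix_equiv_self (eCast n)
      (Matrix.of fun i j : Fin (n + 1) => x ((i : ℕ) + (j : ℕ) + 2))]
    congr 1
    ext (i | u) (j | v) <;>
      [skip; fin_cases v; fin_cases u; (fin_cases u; fin_cases v)] <;>
      simp [eCast, fromBlocks, P, Q, R, S] <;> congr 1 <;> omega
  -- the off-diagonal minors
  set σ : Perm (Fin n ⊕ Fin 1) := (eSucc n).trans (eCast n).symm with hσdef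
  set s : K := (((Perm.sign σ : ℤˣ) : ℤ) : K) with hsdef
  have hs : s * s = 1 := by
    rw [hsdef, ← Int.cast_mul, ← Units.val_mul, Int.units_mul_self]
    norm_num
  set H1 : Matrix (Fin (n + 1)) (Fin (n + 1)) K :=
    Matrix.of fun i j => x ((i : ℕ) + (j : ℕ) + 1) with hH1def
  have h01 : P.det * T 0 1 = s * H1.det := by
    rw [← minor 0 1]
    have e1 : fromBlocks P (Matrix.of fun i (_ : Fin 1) => Q i 1)
        (Matrix.of fun (_ : Fin 1) j => R 0 j)
        (Matrix.of fun (_ : Fin 1) (_ : Fin 1) => S 0 1)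
        = H1.submatrix (eSucc n) (eCast n) := by
      ext (i | u) (j | v) <;>
        [skip; fin_cases v; fin_cases u; (fin_cases u; fin_cases v)] <;>
        simp [eSucc, eCast, fromBlocks, P, Q, R, S, H1] <;> congr 1 <;> omega
    have comp : ∀ p, eCast n (σ p) = eSucc n p := by
      intro p
      rw [hσdef]
      exact (eCast n).apply_symm_apply _
    have e1' : H1.submatrix (eSucc n) (eCast n)
        = (H1.submatrix (eCast n) (eCast n)).submatrix σ id := by
      ext p q
      simp [Matrix.submatrix_apply, comp]
    rw [e1, e1', Matrix.det_permute σ (H1.submatrix (eCast n) (eCast n)),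
      Matrix.det_submatrix_equiv_self, hsdef]
  have h10 : P.det * T 1 0 = s * H1.det := by
    rw [← minor 1 0]
    have e2 : fromBlocks P (Matrix.of fun i (_ : Fin 1) => Q i 0)
        (Matrix.of fun (_ : Fin 1) j => R 1 j)
        (Matrix.of fun (_ : Fin 1) (_ : Fin 1) => S 1 0)
        = (fromBlocks P (Matrix.of fun i (_ : Fin 1) => Q i 1)
            (Matrix.of fun (_ : Fin 1) j => R 0 j)
            (Matrix.of fun (_ : Fin 1) (_ : Fin 1) => S 0 1))ᵀ := by
      ext (i | u) (j | v) <;>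
        [skip; fin_cases v; fin_cases u; (fin_cases u; fin_cases v)] <;>
        simp [fromBlocks, P, Q, R, S, Matrix.transpose_apply] <;> congr 1 <;> omega
    rw [e2, Matrix.det_transpose, minor 0 1, h01]
  have hH1sq : H1.det ^ 2 = (P.det * T 0 1) * (P.det * T 1 0) := by
    rw [h01, h10]
    linear_combination (-(H1.det ^ 2)) * hs
  have hT2 : T.det = T 0 0 * T 1 1 - T 0 1 * T 1 0 := det_fin_two T
  rw [E]
  rw [hH1sq, ← h00, ← h11, hA, hT2]
  ring

lemma map_E {A B : Type*} [CommRing A] [CommRing B] (f : A →+* B) (y : ℕ → A) (n : ℕ) :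
    f (E y n) = E (f ∘ y) n := by
  unfold E
  rw [map_add, map_sub, map_pow, _root_.map_mul, _root_.map_mul,
    RingHom.map_det, RingHom.map_det, RingHom.map_det, RingHom.map_det, RingHom.map_det]
  rfl

lemma generic (n : ℕ) :
    E (fun i => (MvPolynomial.X i : MvPolynomial ℕ ℤ)) n = 0 := by
  set Rg := MvPolynomial ℕ ℤ
  set K := FractionRing Rg
  have inj : Function.Injective (algebraMap Rg K) := IsFractionRing.injective Rg K
  apply inj
  rw [map_zero, map_E]
  apply core
  intro hdet
  -- pull the vanishing determinant back to `Rg`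
  have hD : (Matrix.of fun i j : Fin n =>
      (MvPolynomial.X ((i : ℕ) + (j : ℕ) + 2) : Rg)).det = 0 := by
    apply inj
    rw [map_zero, RingHom.map_det]
    exact hdet
  -- evaluate at a point where the determinant is `±1`
  have hφ := congrArg (MvPolynomial.eval (fun k : ℕ => if k = n + 1 then (1 : ℤ) else 0)) hD
  rw [map_zero, RingHom.map_det] at hφ
  have hmat : (MvPolynomial.eval (fun k : ℕ => if k = n + 1 then (1 : ℤ) else 0)).mapMatrix
        (Matrix.of fun i j : Fin n => (MvPolynomial.X ((i : ℕ) + (j : ℕ) + 2) : Rg))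
      = (1 : Matrix (Fin n) (Fin n) ℤ).submatrix id (Fin.revPerm) := by
    ext i j
    rw [Matrix.submatrix_apply, Matrix.one_apply]
    have hij : ((i : ℕ) + (j : ℕ) + 2 = n + 1) ↔ i = Fin.revPerm j := by
      rw [Fin.ext_iff]
      simp only [Fin.revPerm_apply, Fin.val_rev]
      omega
    simp [hij]
  rw [hmat, Matrix.det_permute' Fin.revPerm, Matrix.det_one, mul_one] at hφ
  simp at hφ

lemma universal {F : Type*} [CommRing F] (x : ℕ → F) (n : ℕ) : E x n = 0 := by
  have h := congrArg (MvPolynomial.eval₂Hom (Int.castRingHom F) x) (generic n)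
  rw [map_zero, map_E] at h
  have : (⇑(MvPolynomial.eval₂Hom (Int.castRingHom F) x) ∘ fun i =>
      (MvPolynomial.X i : MvPolynomial ℕ ℤ)) = x := by
    funext i
    simp
  rwa [this] at h

end HankelJacobi

/-- Jacobi's identity (Desnanot–Jacobi) for Hankel determinants
`M r k = det(a_{i+j+r})_{0≤i,j≤k-1}`:
`M₁(m)² - M₀(m)·M₂(m) + M₀(m+1)·M₂(m-1) = 0` for `m ≥ 1`. -/
theorem hankel_jacobi_identity (F : Type*) [Field F] (a : ℕ → F)
    (M : ℕ → ℕ → F)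
    (hM : ∀ r k, M r k = Matrix.det (Matrix.of fun i j : Fin k =>
      a ((i : ℕ) + (j : ℕ) + r))) :
    ∀ m, 1 ≤ m →
      (M 1 m) ^ 2 - M 0 m * M 2 m + M 0 (m + 1) * M 2 (m - 1) = 0 := by
  intro m hm
  obtain ⟨n, rfl⟩ : ∃ n, m = n + 1 := ⟨m - 1, by omega⟩
  have h := HankelJacobi.universal a n
  rw [HankelJacobi.E] at h
  simp only [hM, Nat.add_zero, Nat.add_sub_cancel]
  convert h using 4
end

section
/- For every positive integer n, Σ_{i=0}^{n-1} [ ( (1/2)_i^2 (5/4)_i (1-2n)_i (2n)_i ) / ( (1)_i^2 (1/4)_i (1/2+2n)_i (3/2-2n)_i ) ] = (4n-1)/3, where (a)_i = a(a+1)···(a+i-1) is the rising factorial. -/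
set_option maxHeartbeats 4000000

/-- The rising factorial (Pochhammer symbol) `(a)_i = a(a+1)⋯(a+i-1)`. -/
def asc (a : ℚ) (i : ℕ) : ℚ := ∏ t ∈ Finset.range i, (a + t)

namespace WZaux

def F (m : ℚ) (i : ℕ) : ℚ :=
  (asc (1 / 2) i) ^ 2 * asc (5 / 4) i * asc (1 - 2 * m) i * asc (2 * m) i /
    ((asc 1 i) ^ 2 * asc (1 / 4) i * asc (1 / 2 + 2 * m) i * asc (3 / 2 - 2 * m) i)

def Rw (m x : ℚ) : ℚ :=
  (x ^ 2 * (-(4 * m - 1) * (3 + 28 * m + 104 * m ^ 2 + 192 * m ^ 3 + 128 * m ^ 4)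
      + (9 + 60 * m + 160 * m ^ 2 + 320 * m ^ 3 + 256 * m ^ 4) * x
      + 4 * (3 + 16 * m + 16 * m ^ 2) * x ^ 2 * (2 * m - x))) /
    (m * (2 * m + 1) * (4 * m - 1) * (x - 2 * m) * (x - 2 * m - 1) * (4 * x + 1)
      * (2 * x + 4 * m + 1))

lemma asc_succ (a : ℚ) (i : ℕ) : asc a (i + 1) = asc a i * (a + i) :=
  Finset.prod_range_succ _ _

lemma asc_succ' (a : ℚ) (i : ℕ) : asc a (i + 1) = a * asc (a + 1) i := by
  unfold asc
  rw [Finset.prod_range_succ']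
  rw [mul_comm]
  congr 1
  · norm_num
  · apply Finset.prod_congr rfl
    intro t _
    push_cast
    ring

lemma asc_shift2 (a : ℚ) (i : ℕ) :
    asc a i * (a + i) * (a + i + 1) = a * (a + 1) * asc (a + 2) i := by
  have h1 : asc a (i + 2) = asc a i * (a + i) * (a + i + 1) := by
    have e1 : asc a (i + 2) = asc a (i + 1) * (a + (i + 1 : ℕ)) := asc_succ a (i + 1)
    rw [e1, asc_succ]
    push_cast
    ring
  have h2 : asc a (i + 2) = a * (a + 1) * asc (a + 2) i := by
    have e1 : asc a (i + 2) = a * asc (a + 1) (i + 1) := asc_succ' a (i + 1)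
    rw [e1, asc_succ']
    ring_nf
  rw [← h1, h2]

lemma asc_pos {a : ℚ} (ha : 0 < a) (i : ℕ) : 0 < asc a i := by
  apply Finset.prod_pos
  intro t _
  positivity

lemma asc_half_ne (n i : ℕ) : asc (3 / 2 - 2 * (n : ℚ)) i ≠ 0 := by
  unfold asc
  rw [Finset.prod_ne_zero_iff]
  intro t _ h
  have h2 : (2 * t + 3 : ℚ) = 4 * n := by linarith
  have h3 : (2 * t + 3 : ℕ) = 4 * n := by exact_mod_cast h2
  omega

lemma F_succ (m : ℚ) (i : ℕ)
    (hb1 : asc 1 i ≠ 0) (hb2 : asc (1 / 4) i ≠ 0)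
    (hb3 : asc (1 / 2 + 2 * m) i ≠ 0) (hb4 : asc (3 / 2 - 2 * m) i ≠ 0)
    (h11 : 1 + (i : ℚ) ≠ 0) (h12 : 1 / 4 + (i : ℚ) ≠ 0)
    (h7 : 1 / 2 + 2 * m + (i : ℚ) ≠ 0) (h13 : 3 / 2 - 2 * m + (i : ℚ) ≠ 0) :
    F m (i + 1) =
      ((1 / 2 + (i : ℚ)) ^ 2 * (5 / 4 + (i : ℚ)) * (1 - 2 * m + (i : ℚ)) * (2 * m + (i : ℚ)) /
        ((1 + (i : ℚ)) ^ 2 * (1 / 4 + (i : ℚ)) * (1 / 2 + 2 * m + (i : ℚ))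
          * (3 / 2 - 2 * m + (i : ℚ)))) * F m i := by
  unfold F
  simp only [asc_succ]
  field_simp

lemma F_up_key (A B C D E G H K c1 c2 d1 d1' d2 h1 h1' h2 k1 k2 : ℚ)
    (hE : E ≠ 0) (hG : G ≠ 0) (hH : H ≠ 0) (hK : K ≠ 0) (hc2 : c2 ≠ 0) (hd2 : d2 ≠ 0)
    (hh1 : h1 ≠ 0) (hh1' : h1' ≠ 0) (hh2 : h2 ≠ 0) (hk1 : k1 ≠ 0) (hk2 : k2 ≠ 0) :
    A ^ 2 * B * (c1 * C / c2) * (D * d1 * d1' / d2) /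
        (E ^ 2 * G * (H * h1 * h1' / h2) * (k1 * K / k2)) =
      ((c1 / c2) * (d1 * d1' / d2) * (h2 / (h1 * h1')) * (k2 / k1)) *
        (A ^ 2 * B * C * D / (E ^ 2 * G * H * K)) := by
  field_simp

lemma F_up (m : ℚ) (i : ℕ)
    (hb1 : asc 1 i ≠ 0) (hb2 : asc (1 / 4) i ≠ 0)
    (hb3 : asc (1 / 2 + 2 * m) i ≠ 0) (hb4 : asc (3 / 2 - 2 * m) i ≠ 0)
    (h2m : (2 : ℚ) * m ≠ 0) (h2m1 : 2 * m + 1 ≠ 0)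
    (q1 : 1 / 2 + 2 * m ≠ 0) (q2 : 3 / 2 + 2 * m ≠ 0)
    (qx1 : 1 / 2 + 2 * m + (i : ℚ) ≠ 0) (qx2 : 3 / 2 + 2 * m + (i : ℚ) ≠ 0)
    (p1 : (i : ℚ) - 2 * m - 1 ≠ 0) (p2 : (i : ℚ) - 2 * m ≠ 0)
    (p3 : (i : ℚ) - 2 * m - 1 / 2 ≠ 0) (p4 : (i : ℚ) - 2 * m + 1 / 2 ≠ 0)
    (p5 : -1 / 2 - 2 * m ≠ 0) (p6 : 1 / 2 - 2 * m ≠ 0) :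
    F (m + 1) i =
      (((-1 - 2 * m) * (-2 * m) / (((i : ℚ) - 2 * m - 1) * ((i : ℚ) - 2 * m)))
        * ((2 * m + (i : ℚ)) * (2 * m + 1 + (i : ℚ)) / ((2 * m) * (2 * m + 1)))
        * ((1 / 2 + 2 * m) * (3 / 2 + 2 * m)
            / ((1 / 2 + 2 * m + (i : ℚ)) * (3 / 2 + 2 * m + (i : ℚ))))
        * (((i : ℚ) - 2 * m - 1 / 2) * ((i : ℚ) - 2 * m + 1 / 2)
            / ((-1 / 2 - 2 * m) * (1 / 2 - 2 * m)))) * F m i := by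
  have e1 : (1 - 2 * (m + 1) : ℚ) = -1 - 2 * m := by ring
  have e2 : (2 * (m + 1) : ℚ) = 2 * m + 2 := by ring
  have e3 : (1 / 2 + (2 * m + 2) : ℚ) = (1 / 2 + 2 * m) + 2 := by ring
  have e4 : (3 / 2 - (2 * m + 2) : ℚ) = -1 / 2 - 2 * m := by ring
  unfold F
  rw [e1, e2, e3, e4]
  have hc3 : asc (-1 - 2 * m) i =
      (-1 - 2 * m) * (-2 * m) * asc (1 - 2 * m) i
        / (((i : ℚ) - 2 * m - 1) * ((i : ℚ) - 2 * m)) := by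
    rw [eq_div_iff (mul_ne_zero p1 p2)]
    have h := asc_shift2 (-1 - 2 * m) i
    have e : ((-1 - 2 * m) + 2 : ℚ) = 1 - 2 * m := by ring
    rw [e] at h
    linear_combination h
  have hc4 : asc (2 * m + 2) i =
      asc (2 * m) i * (2 * m + (i : ℚ)) * (2 * m + 1 + (i : ℚ)) / ((2 * m) * (2 * m + 1)) := by
    rw [eq_div_iff (mul_ne_zero h2m h2m1)]
    have h := asc_shift2 (2 * m) i
    linear_combination -h
  have hd3 : asc ((1 / 2 + 2 * m) + 2) i =
      asc (1 / 2 + 2 * m) i * (1 / 2 + 2 * m + (i : ℚ)) * (3 / 2 + 2 * m + (i : ℚ))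
        / ((1 / 2 + 2 * m) * (3 / 2 + 2 * m)) := by
    rw [eq_div_iff (mul_ne_zero q1 q2)]
    have h := asc_shift2 (1 / 2 + 2 * m) i
    linear_combination -h
  have hd4 : asc (-1 / 2 - 2 * m) i =
      (-1 / 2 - 2 * m) * (1 / 2 - 2 * m) * asc (3 / 2 - 2 * m) i
        / (((i : ℚ) - 2 * m - 1 / 2) * ((i : ℚ) - 2 * m + 1 / 2)) := by
    rw [eq_div_iff (mul_ne_zero p3 p4)]
    have h := asc_shift2 (-1 / 2 - 2 * m) i
    have e : ((-1 / 2 - 2 * m) + 2 : ℚ) = 3 / 2 - 2 * m := by ring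
    rw [e] at h
    linear_combination h
  rw [hc3, hc4, hd3, hd4]
  exact F_up_key _ _ _ _ _ _ _ _ _ _ _ _ _ _ _ _ _ _ hb1 hb2 hb3 hb4 (mul_ne_zero p1 p2)
    (mul_ne_zero h2m h2m1) qx1 qx2 (mul_ne_zero q1 q2) (mul_ne_zero p5 p6) (mul_ne_zero p3 p4)

lemma core (m x : ℚ)
    (h1 : x - 2 * m ≠ 0) (h2 : x - 2 * m - 1 ≠ 0) (h3 : (2 : ℚ) * m ≠ 0)
    (h4 : 2 * m + 1 ≠ 0) (h5 : 1 / 2 + 2 * m ≠ 0) (h6 : 3 / 2 + 2 * m ≠ 0)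
    (h7 : 1 / 2 + 2 * m + x ≠ 0) (h8 : 3 / 2 + 2 * m + x ≠ 0)
    (h9 : -1 / 2 - 2 * m ≠ 0) (h10 : 1 / 2 - 2 * m ≠ 0)
    (h11 : 1 + x ≠ 0) (h12 : 1 / 4 + x ≠ 0) (h13 : 3 / 2 - 2 * m + x ≠ 0)
    (h14 : x - 2 * m - 1 / 2 ≠ 0) (h15 : x - 2 * m + 1 / 2 ≠ 0)
    (h16 : m ≠ 0) (h17 : 4 * m - 1 ≠ 0) (h18 : 4 * x + 1 ≠ 0)
    (h19 : 2 * x + 4 * m + 1 ≠ 0) (h20 : x + 1 - 2 * m ≠ 0)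
    (h21 : 4 * (x + 1) + 1 ≠ 0) (h22 : 2 * (x + 1) + 4 * m + 1 ≠ 0)
    (h23 : x + 1 - 2 * m - 1 ≠ 0) :
    ((-1 - 2 * m) * (-2 * m) / ((x - 2 * m - 1) * (x - 2 * m)))
      * ((2 * m + x) * (2 * m + 1 + x) / ((2 * m) * (2 * m + 1)))
      * ((1 / 2 + 2 * m) * (3 / 2 + 2 * m) / ((1 / 2 + 2 * m + x) * (3 / 2 + 2 * m + x)))
      * ((x - 2 * m - 1 / 2) * (x - 2 * m + 1 / 2) / ((-1 / 2 - 2 * m) * (1 / 2 - 2 * m)))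
    = (4 * m + 3) / (4 * m - 1)
      + Rw m (x + 1) *
          ((1 / 2 + x) ^ 2 * (5 / 4 + x) * (1 - 2 * m + x) * (2 * m + x) /
            ((1 + x) ^ 2 * (1 / 4 + x) * (1 / 2 + 2 * m + x) * (3 / 2 - 2 * m + x)))
      - Rw m x := by
  unfold Rw
  have hLden : (x - 2 * m - 1) * (x - 2 * m) * (2 * m * (2 * m + 1))
      * ((1 / 2 + 2 * m + x) * (3 / 2 + 2 * m + x))
      * ((-1 / 2 - 2 * m) * (1 / 2 - 2 * m)) ≠ 0 :=
    mul_ne_zero (mul_ne_zero (mul_ne_zero (mul_ne_zero h2 h1) (mul_ne_zero h3 h4))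
      (mul_ne_zero h7 h8)) (mul_ne_zero h9 h10)
  have hD2 : m * (2 * m + 1) * (4 * m - 1) * (x + 1 - 2 * m) * (x + 1 - 2 * m - 1)
      * (4 * (x + 1) + 1) * (2 * (x + 1) + 4 * m + 1)
      * ((1 + x) ^ 2 * (1 / 4 + x) * (1 / 2 + 2 * m + x) * (3 / 2 - 2 * m + x)) ≠ 0 :=
    mul_ne_zero (mul_ne_zero (mul_ne_zero (mul_ne_zero (mul_ne_zero (mul_ne_zero
      (mul_ne_zero h16 h4) h17) h20) h23) h21) h22)
      (mul_ne_zero (mul_ne_zero (mul_ne_zero (pow_ne_zero 2 h11) h12) h7) h13)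
  have hD3 : m * (2 * m + 1) * (4 * m - 1) * (x - 2 * m) * (x - 2 * m - 1) * (4 * x + 1)
      * (2 * x + 4 * m + 1) ≠ 0 :=
    mul_ne_zero (mul_ne_zero (mul_ne_zero (mul_ne_zero (mul_ne_zero (mul_ne_zero h16 h4) h17)
      h1) h2) h18) h19
  rw [div_mul_div_comm, div_mul_div_comm, div_mul_div_comm, div_mul_div_comm,
    div_add_div _ _ h17 hD2, div_sub_div _ _ (mul_ne_zero h17 hD2) hD3,
    div_eq_div_iff hLden (mul_ne_zero (mul_ne_zero h17 hD2) hD3)]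
  ring

lemma boundary (m : ℚ) (hm2 : (2 : ℚ) ≤ m) (h3m : 3 / 2 - m ≠ 0) :
    (4 * m + 3) / (4 * m - 1)
      + Rw m (m + 1) *
          ((1 / 2 + m) ^ 2 * (5 / 4 + m) * (1 - 2 * m + m) * (2 * m + m) /
            ((1 + m) ^ 2 * (1 / 4 + m) * (1 / 2 + 2 * m + m) * (3 / 2 - 2 * m + m))) = 0 := by
  have e : (3 / 2 - 2 * m + m : ℚ) = 3 / 2 - m := by ring
  have hm : m ≠ 0 := by intro h; rw [h] at hm2; norm_num at hm2
  have h1 : (2 : ℚ) * m + 1 ≠ 0 := by intro h; nlinarith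
  have h2 : (4 : ℚ) * m - 1 ≠ 0 := by intro h; nlinarith
  have h3 : (m + 1 : ℚ) - 2 * m ≠ 0 := by intro h; nlinarith
  have h4 : (m + 1 : ℚ) - 2 * m - 1 ≠ 0 := by intro h; nlinarith
  have h5 : (4 : ℚ) * (m + 1) + 1 ≠ 0 := by intro h; nlinarith
  have h6 : (2 : ℚ) * (m + 1) + 4 * m + 1 ≠ 0 := by intro h; nlinarith
  have h7 : (1 : ℚ) + m ≠ 0 := by intro h; nlinarith
  have h8 : (1 : ℚ) / 4 + m ≠ 0 := by intro h; nlinarith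
  have h9 : (1 : ℚ) / 2 + 2 * m + m ≠ 0 := by intro h; nlinarith
  rw [e]
  unfold Rw
  have hD1 : m * (2 * m + 1) * (4 * m - 1) * (m + 1 - 2 * m) * (m + 1 - 2 * m - 1)
      * (4 * (m + 1) + 1) * (2 * (m + 1) + 4 * m + 1) ≠ 0 :=
    mul_ne_zero (mul_ne_zero (mul_ne_zero (mul_ne_zero (mul_ne_zero (mul_ne_zero hm h1) h2) h3)
      h4) h5) h6
  have hQ : (1 + m) ^ 2 * (1 / 4 + m) * (1 / 2 + 2 * m + m) * (3 / 2 - m) ≠ 0 :=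
    mul_ne_zero (mul_ne_zero (mul_ne_zero (pow_ne_zero 2 h7) h8) h9) h3m
  rw [div_mul_div_comm, div_add_div _ _ h2 (mul_ne_zero hD1 hQ), div_eq_zero_iff]
  left
  ring

lemma step (n i : ℕ) (hn : 2 ≤ n) (hi : i ≤ n) :
    F ((n : ℚ) + 1) i =
      (4 * (n : ℚ) + 3) / (4 * (n : ℚ) - 1) * F (n : ℚ) i +
        (Rw (n : ℚ) ((i : ℚ) + 1) * F (n : ℚ) (i + 1) - Rw (n : ℚ) (i : ℚ) * F (n : ℚ) i) := by
  have hxm : (i : ℚ) ≤ (n : ℚ) := by exact_mod_cast hi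
  have hm2 : (2 : ℚ) ≤ (n : ℚ) := by exact_mod_cast hn
  have hx0 : (0 : ℚ) ≤ (i : ℚ) := Nat.cast_nonneg i
  have hb1 : asc 1 i ≠ 0 := ne_of_gt (asc_pos one_pos i)
  have hb2 : asc (1 / 4) i ≠ 0 := ne_of_gt (asc_pos (by norm_num) i)
  have hb3 : asc (1 / 2 + 2 * (n : ℚ)) i ≠ 0 := ne_of_gt (asc_pos (by positivity) i)
  have hb4 : asc (3 / 2 - 2 * (n : ℚ)) i ≠ 0 := asc_half_ne n i
  have h2m : (2 : ℚ) * (n : ℚ) ≠ 0 := by positivity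
  have h2m1 : 2 * (n : ℚ) + 1 ≠ 0 := by positivity
  have q1 : 1 / 2 + 2 * (n : ℚ) ≠ 0 := by positivity
  have q2 : 3 / 2 + 2 * (n : ℚ) ≠ 0 := by positivity
  have qx1 : 1 / 2 + 2 * (n : ℚ) + (i : ℚ) ≠ 0 := by positivity
  have qx2 : 3 / 2 + 2 * (n : ℚ) + (i : ℚ) ≠ 0 := by positivity
  have p1 : (i : ℚ) - 2 * (n : ℚ) - 1 ≠ 0 := by intro h; nlinarith
  have p2 : (i : ℚ) - 2 * (n : ℚ) ≠ 0 := by intro h; nlinarith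
  have p3 : (i : ℚ) - 2 * (n : ℚ) - 1 / 2 ≠ 0 := by
    intro h
    have h2 : ((2 * i : ℕ) : ℚ) = ((4 * n + 1 : ℕ) : ℚ) := by push_cast; linarith
    have h3 : (2 * i : ℕ) = 4 * n + 1 := Nat.cast_injective h2
    omega
  have p4 : (i : ℚ) - 2 * (n : ℚ) + 1 / 2 ≠ 0 := by
    intro h
    have h2 : ((4 * n : ℕ) : ℚ) = ((2 * i + 1 : ℕ) : ℚ) := by push_cast; linarith
    have h3 : (4 * n : ℕ) = 2 * i + 1 := Nat.cast_injective h2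
    omega
  have p5 : -1 / 2 - 2 * (n : ℚ) ≠ 0 := by intro h; nlinarith
  have p6 : 1 / 2 - 2 * (n : ℚ) ≠ 0 := by intro h; nlinarith
  have h11 : 1 + (i : ℚ) ≠ 0 := by positivity
  have h12 : 1 / 4 + (i : ℚ) ≠ 0 := by positivity
  have h13 : 3 / 2 - 2 * (n : ℚ) + (i : ℚ) ≠ 0 := by
    intro h
    have h2 : ((4 * n : ℕ) : ℚ) = ((2 * i + 3 : ℕ) : ℚ) := by push_cast; linarith
    have h3 : (4 * n : ℕ) = 2 * i + 3 := Nat.cast_injective h2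
    omega
  have h16 : (n : ℚ) ≠ 0 := by positivity
  have h17 : 4 * (n : ℚ) - 1 ≠ 0 := by intro h; nlinarith
  have h18 : 4 * (i : ℚ) + 1 ≠ 0 := by positivity
  have h19 : 2 * (i : ℚ) + 4 * (n : ℚ) + 1 ≠ 0 := by positivity
  have h20 : (i : ℚ) + 1 - 2 * (n : ℚ) ≠ 0 := by intro h; nlinarith
  have h21 : 4 * ((i : ℚ) + 1) + 1 ≠ 0 := by positivity
  have h22 : 2 * ((i : ℚ) + 1) + 4 * (n : ℚ) + 1 ≠ 0 := by positivity
  have h23 : (i : ℚ) + 1 - 2 * (n : ℚ) - 1 ≠ 0 := by intro h; nlinarith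
  rw [F_up (n : ℚ) i hb1 hb2 hb3 hb4 h2m h2m1 q1 q2 qx1 qx2 p1 p2 p3 p4 p5 p6]
  rw [F_succ (n : ℚ) i hb1 hb2 hb3 hb4 h11 h12 qx1 h13]
  rw [core (n : ℚ) (i : ℚ) p2 p1 h2m h2m1 q1 q2 qx1 qx2 p5 p6 h11 h12 h13 p3 p4 h16 h17 h18 h19
    h20 h21 h22 h23]
  ring

lemma aux (n : ℕ) (hn : 2 ≤ n) :
    ∑ i ∈ Finset.range n, F (n : ℚ) i = (4 * (n : ℚ) - 1) / 3 := by
  induction n, hn using Nat.le_induction with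
  | base =>
    rw [Finset.sum_range_succ, Finset.sum_range_succ, Finset.sum_range_zero]
    norm_num [F, asc, Finset.prod_range_succ, Finset.prod_range_zero]
  | succ n hn IH =>
    have hcast : ((n + 1 : ℕ) : ℚ) = (n : ℚ) + 1 := by push_cast; ring
    rw [hcast]
    set m : ℚ := (n : ℚ) with hmdef
    have hstep : ∀ i ∈ Finset.range (n + 1),
        F (m + 1) i =
          (4 * m + 3) / (4 * m - 1) * F m i +
            ((fun j : ℕ => Rw m (j : ℚ) * F m j) (i + 1)
              - (fun j : ℕ => Rw m (j : ℚ) * F m j) i) := by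
      intro i hi
      have hi' : i ≤ n := Nat.lt_succ_iff.mp (Finset.mem_range.mp hi)
      simp only []
      have hc : ((i + 1 : ℕ) : ℚ) = (i : ℚ) + 1 := by push_cast; ring
      rw [hc]
      exact step n i hn hi'
    rw [Finset.sum_congr rfl hstep, Finset.sum_add_distrib, ← Finset.mul_sum,
      Finset.sum_range_sub (fun j : ℕ => Rw m (j : ℚ) * F m j)]
    rw [Finset.sum_range_succ, IH]
    have hg0 : Rw m ((0 : ℕ) : ℚ) * F m 0 = 0 := by
      norm_num [Rw]
    rw [hg0]
    have hc2 : ((n + 1 : ℕ) : ℚ) = m + 1 := by rw [hmdef]; push_cast; ring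
    rw [hc2]
    -- F m (n+1) = r * F m n
    have hm2 : (2 : ℚ) ≤ m := by rw [hmdef]; exact_mod_cast hn
    have hb1 : asc 1 n ≠ 0 := ne_of_gt (asc_pos one_pos n)
    have hb2 : asc (1 / 4) n ≠ 0 := ne_of_gt (asc_pos (by norm_num) n)
    have hb3 : asc (1 / 2 + 2 * m) n ≠ 0 := ne_of_gt (asc_pos (by positivity) n)
    have hb4 : asc (3 / 2 - 2 * m) n ≠ 0 := asc_half_ne n n
    have h11 : 1 + m ≠ 0 := by positivity
    have h12 : 1 / 4 + m ≠ 0 := by positivity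
    have qx1 : 1 / 2 + 2 * m + m ≠ 0 := by positivity
    have h3m : 3 / 2 - m ≠ 0 := by
      intro h
      rw [hmdef] at h
      have h2 : ((2 * n : ℕ) : ℚ) = ((3 : ℕ) : ℚ) := by push_cast; linarith
      have h3 : (2 * n : ℕ) = 3 := Nat.cast_injective h2
      omega
    have h13 : 3 / 2 - 2 * m + m ≠ 0 := by
      intro h; apply h3m; linarith
    rw [F_succ m n hb1 hb2 hb3 hb4 h11 h12 qx1 h13]
    have hb := boundary m hm2 h3m
    have hk : (4 * m + 3) / (4 * m - 1) * ((4 * m - 1) / 3) = (4 * m + 3) / 3 := by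
      have h17 : 4 * m - 1 ≠ 0 := by intro h; nlinarith
      field_simp
    linear_combination (F m n) * hb + hk

end WZaux

/-- For every positive integer `n`,
`∑_{i=0}^{n-1} ((1/2)_i^2 (5/4)_i (1-2n)_i (2n)_i) / ((1)_i^2 (1/4)_i (1/2+2n)_i (3/2-2n)_i)
 = (4n-1)/3`. -/
theorem wz_partial_sum (n : ℕ) (hn : 1 ≤ n) :
    ∑ i ∈ Finset.range n,
        (asc (1 / 2) i) ^ 2 * asc (5 / 4) i * asc (1 - 2 * (n : ℚ)) i *
            asc (2 * (n : ℚ)) i /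
          ((asc 1 i) ^ 2 * asc (1 / 4) i * asc (1 / 2 + 2 * (n : ℚ)) i *
            asc (3 / 2 - 2 * (n : ℚ)) i) =
      (4 * (n : ℚ) - 1) / 3 := by
  rcases eq_or_lt_of_le hn with h1 | h2
  · rw [← h1]
    norm_num [asc, Finset.sum_range_one]
  · have h2' : 2 ≤ n := h2
    simpa only [WZaux.F] using WZaux.aux n h2'
end

section
/- Let f_0, f_1, f_2, ... be formal power series in x with nonzero constant terms and let c_1, c_2, ... be constants such that f_k - f_{k-1} = c_k x^2 f_{k+1} for all k ≥ 1. Then for each m ≥ 1, the quotient f_m/f_{m-1} equals the continued fraction 1/(1 - c_m x^2/(1 - c_{m+1} x^2/(1 - ···))), in the sense that f_m/f_{m-1} agrees with the n-th convergent of this continued fraction modulo x^{2n} for every n. -/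
open PowerSeries

/-- The depth-`n` convergent of the continued fraction
`1/(1 - c_m x²/(1 - c_{m+1} x²/(1 - ⋯)))`, as a formal power series. -/
noncomputable def cfConv (F : Type) [Field F] (c : ℕ → F) : ℕ → ℕ → PowerSeries F
  | _, 0 => 1
  | m, n + 1 =>
      (1 - PowerSeries.C (c m) * PowerSeries.X ^ 2 * cfConv F c (m + 1) n)⁻¹

/-- If `f₀, f₁, …` are formal power series with nonzero constant terms satisfying
`f_k - f_{k-1} = c_k x² f_{k+1}` for `k ≥ 1`, then for each `m ≥ 1` the quotient
`f_m / f_{m-1}` equals the continued fraction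
`1/(1 - c_m x²/(1 - c_{m+1} x²/(1 - ⋯)))`, in the sense that it agrees with the
depth-`n` convergent modulo `x^{2n}` for every `n`. -/
theorem cf_of_recurrence (F : Type) [Field F] (f : ℕ → PowerSeries F) (c : ℕ → F)
    (h0 : ∀ k, PowerSeries.constantCoeff (f k) ≠ 0)
    (hrec : ∀ k, 1 ≤ k →
      f k - f (k - 1) = PowerSeries.C (c k) * PowerSeries.X ^ 2 * f (k + 1)) :
    ∀ m, 1 ≤ m → ∀ n : ℕ,
      (PowerSeries.X : PowerSeries F) ^ (2 * n) ∣
        (f m * (f (m - 1))⁻¹ - cfConv F c m n) := by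
  intro m hm n
  induction n generalizing m with
  | zero => simp [cfConv]
  | succ n ih =>
    have hg := ih (m + 1) (by omega)
    simp only [Nat.add_sub_cancel] at hg
    set r : PowerSeries F := f (m + 1) * (f m)⁻¹ with hr
    set g : PowerSeries F := cfConv F c (m + 1) n with hgdef
    set A : PowerSeries F := 1 - PowerSeries.C (c m) * PowerSeries.X ^ 2 * r with hA
    set B : PowerSeries F := 1 - PowerSeries.C (c m) * PowerSeries.X ^ 2 * g with hB
    have hcA : PowerSeries.constantCoeff A ≠ 0 := by
      simp [hA, pow_two]
    have hcB : PowerSeries.constantCoeff B ≠ 0 := by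
      simp [hB, pow_two]
    have hfm1 : f (m - 1) = f m * A := by
      have h1 := hrec m hm
      have h2 : f m * (f m)⁻¹ = 1 :=
        PowerSeries.mul_inv_cancel _ (h0 m)
      have hfr : f m * r = f (m + 1) := by
        rw [hr, mul_comm (f (m + 1)), ← mul_assoc, h2, one_mul]
      rw [hA]
      linear_combination -h1 + (PowerSeries.C (c m) * PowerSeries.X ^ 2) * hfr
    have hquot : f m * (f (m - 1))⁻¹ = A⁻¹ := by
      rw [hfm1, PowerSeries.mul_inv_rev, ← mul_assoc, mul_comm (f m),
        mul_assoc, PowerSeries.mul_inv_cancel _ (h0 m), mul_one]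
    have hAinv : A * A⁻¹ = 1 := PowerSeries.mul_inv_cancel _ hcA
    have hBinv : B * B⁻¹ = 1 := PowerSeries.mul_inv_cancel _ hcB
    have key : A⁻¹ - B⁻¹ = A⁻¹ * B⁻¹ * (B - A) := by
      have : A⁻¹ * B⁻¹ * (B - A) = A⁻¹ * (B * B⁻¹) - B⁻¹ * (A * A⁻¹) := by ring
      rw [this, hAinv, hBinv]; ring
    have hBA : B - A = PowerSeries.C (c m) * PowerSeries.X ^ 2 * (r - g) := by
      rw [hA, hB]; ring
    rw [hquot]
    show (PowerSeries.X : PowerSeries F) ^ (2 * (n + 1)) ∣ A⁻¹ - B⁻¹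
    rw [key, hBA]
    obtain ⟨q, hq⟩ := hg
    rw [hq]
    exact ⟨A⁻¹ * B⁻¹ * PowerSeries.C (c m) * q, by ring_nf⟩
end
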